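/- arXiv:2109.11466 — 2 statements merged into one kernel-verified Lean document; each statement's English description precedes it below -/
import Mathlib

section
/- (Expected push from a dyadic scale, lower bound.) There exists an absolute constant C > 0 such that for every integer n ≥ 1 and every j ∈ ℤ with 2^j ≥ 1/√n, if Z is a random variable uniformly distributed on the interval [2^j, 2^{j+1}], then E[ √(Z² + 1/n) − Z ] ≥ (log 2)/(n · 2^{j+1}) − C/(n² · 2^{3j}). -/
open MeasureTheory ProbabilityTheory Filter Set

/-- `Z` is uniformly distributed on the dyadic interval `[2^j, 2^(j+1)]`
(of length `2^j`) under `P`. -/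
def UniformOnDyadic {Ω : Type*} [MeasurableSpace Ω] (P : Measure Ω) (Z : Ω → ℝ)
    (j : ℤ) : Prop :=
  Measurable Z ∧
    P.map Z = (ENNReal.ofReal ((2 : ℝ) ^ j))⁻¹ •
      volume.restrict (Set.Icc ((2 : ℝ) ^ j) ((2 : ℝ) ^ (j + 1)))

/-- Pointwise lower bound: for `0 < x`, `0 < b ≤ x²`,
`x + b/(2x) - b²/(8x³) ≤ √(x² + b)`. -/
lemma sqrt_lower (x b : ℝ) (hx : 0 < x) (hb : 0 < b) (hbx : b ≤ x ^ 2) :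
    x + b / (2 * x) - b ^ 2 / (8 * x ^ 3) ≤ Real.sqrt (x ^ 2 + b) := by
  have hx3 : (0 : ℝ) < 8 * x ^ 3 := by positivity
  have hrw : x + b / (2 * x) - b ^ 2 / (8 * x ^ 3)
      = (8 * x ^ 4 + 4 * b * x ^ 2 - b ^ 2) / (8 * x ^ 3) := by
    field_simp; ring
  have hnum : 0 < 8 * x ^ 4 + 4 * b * x ^ 2 - b ^ 2 := by nlinarith
  rw [hrw, Real.le_sqrt (by positivity) (by positivity), div_pow,
    div_le_iff₀ (by positivity)]
  nlinarith [mul_nonneg (le_of_lt (pow_pos hb 3)) (by nlinarith : (0:ℝ) ≤ 8 * x ^ 2 - b)]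

/-- Expected push from a dyadic scale, lower bound. There is an
absolute constant `C > 0` such that if `2^j ≥ 1/√n` and `Z` is uniform on
`[2^j, 2^(j+1)]`, then `E[√(Z² + 1/n) - Z] ≥ (log 2)/(n 2^(j+1)) - C/(n² 2^(3j))`. -/
theorem statement7 :
    ∃ C : ℝ, 0 < C ∧
    ∀ (n : ℕ), 1 ≤ n → ∀ (j : ℤ), 1 / Real.sqrt n ≤ (2 : ℝ) ^ j →
    ∀ (Ω : Type) (mΩ : MeasurableSpace Ω) (P : Measure Ω), IsProbabilityMeasure P →
    ∀ (Z : Ω → ℝ), UniformOnDyadic P Z j →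
      Real.log 2 / (n * (2 : ℝ) ^ (j + 1)) - C / (n ^ 2 * (2 : ℝ) ^ (3 * j))
        ≤ ∫ ω, (Real.sqrt (Z ω ^ 2 + 1 / n) - Z ω) ∂P := by
  refine ⟨1 / 8, by norm_num, ?_⟩
  intro n hn j hj Ω mΩ P hP Z hZ
  obtain ⟨hZm, hmap⟩ := hZ
  set a : ℝ := (2 : ℝ) ^ j with ha
  have ha0 : 0 < a := zpow_pos (by norm_num) j
  have hn0 : (0 : ℝ) < n := by exact_mod_cast Nat.pos_of_ne_zero (by omega)
  have hb0 : (0 : ℝ) < 1 / n := by positivity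
  -- `1/n ≤ a²`
  have hna : 1 / (n : ℝ) ≤ a ^ 2 := by
    have hs : (0 : ℝ) < Real.sqrt n := Real.sqrt_pos.mpr hn0
    have h2 : (1 / Real.sqrt n) ^ 2 ≤ a ^ 2 := by
      apply pow_le_pow_left₀ (by positivity) hj
    calc (1 : ℝ) / n = (1 / Real.sqrt n) ^ 2 := by
          rw [div_pow, one_pow, Real.sq_sqrt hn0.le]
      _ ≤ a ^ 2 := h2
  have h2a : (2 : ℝ) ^ (j + 1) = 2 * a := by
    rw [ha, zpow_add_one₀ (by norm_num : (2:ℝ) ≠ 0)]; ring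
  have h3a : (2 : ℝ) ^ (3 * j) = a ^ 3 := by
    rw [ha, show (3 : ℤ) * j = j + j + j by ring, zpow_add₀ (by norm_num : (2:ℝ) ≠ 0),
      zpow_add₀ (by norm_num : (2:ℝ) ≠ 0)]; ring
  -- the integrand
  set f : ℝ → ℝ := fun x => Real.sqrt (x ^ 2 + 1 / n) - x with hf
  have hfc : Continuous f := by
    apply Continuous.sub _ continuous_id
    exact (Real.continuous_sqrt).comp (by continuity)
  -- transfer the integral to the interval
  have htrans : ∫ ω, (Real.sqrt (Z ω ^ 2 + 1 / n) - Z ω) ∂P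
      = a⁻¹ * ∫ x in Icc a (2 * a), f x := by
    have : ∫ ω, (Real.sqrt (Z ω ^ 2 + 1 / n) - Z ω) ∂P = ∫ x, f x ∂(P.map Z) := by
      rw [integral_map hZm.aemeasurable hfc.aestronglyMeasurable]
    rw [this, hmap, integral_smul_measure, h2a]
    rw [ENNReal.toReal_inv, ENNReal.toReal_ofReal ha0.le]
    rfl
  rw [htrans, h2a, h3a]
  -- the comparison function
  set g : ℝ → ℝ := fun x => (1 / (2 * n)) * (1 / x) - 1 / (8 * n ^ 2 * a ^ 3) with hg
  have hgle : ∀ x ∈ Icc a (2 * a), g x ≤ f x := by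
    intro x hx
    have hxa : a ≤ x := hx.1
    have hx0 : 0 < x := lt_of_lt_of_le ha0 hxa
    have hbx : 1 / (n : ℝ) ≤ x ^ 2 := hna.trans (by nlinarith)
    have hmain := sqrt_lower x (1 / n) hx0 hb0 hbx
    have hterm : (1 / (n:ℝ)) ^ 2 / (8 * x ^ 3) ≤ 1 / (8 * n ^ 2 * a ^ 3) := by
      rw [div_pow, one_pow]
      rw [div_div]
      apply div_le_div_of_nonneg_left (by norm_num) (by positivity)
      have : a ^ 3 ≤ x ^ 3 := pow_le_pow_left₀ ha0.le hxa 3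
      nlinarith
    have h1 : (1 / (2 * (n:ℝ))) * (1 / x) = (1 / (n:ℝ)) / (2 * x) := by
      field_simp
    simp only [hg, hf]
    rw [h1]
    nlinarith [hmain, hterm]
  -- integrability
  have hfint : IntegrableOn f (Icc a (2 * a)) := hfc.integrableOn_Icc
  have hgc : ContinuousOn g (Icc a (2 * a)) := by
    apply ContinuousOn.sub _ continuousOn_const
    apply ContinuousOn.mul continuousOn_const
    apply ContinuousOn.div continuousOn_const continuousOn_id
    intro x hx
    exact ne_of_gt (lt_of_lt_of_le ha0 hx.1)
  have hgint : IntegrableOn g (Icc a (2 * a)) := hgc.integrableOn_Icc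
  have hmono : ∫ x in Icc a (2 * a), g x ≤ ∫ x in Icc a (2 * a), f x :=
    setIntegral_mono_on hgint hfint measurableSet_Icc hgle
  -- compute the integral of `g`
  have hcalc : ∫ x in Icc a (2 * a), g x
      = (1 / (2 * n)) * Real.log 2 - (1 / (8 * n ^ 2 * a ^ 3)) * a := by
    rw [integral_Icc_eq_integral_Ioc,
      ← intervalIntegral.integral_of_le (by linarith : a ≤ 2 * a)]
    have h0 : (0 : ℝ) ∉ Set.uIcc a (2 * a) := by
      rw [Set.uIcc_of_le (by linarith)]
      intro h
      exact absurd h.1 (by linarith)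
    have hint1 : IntervalIntegrable (fun x : ℝ => (1 / (2 * (n:ℝ))) * (1 / x))
        volume a (2 * a) := by
      apply ContinuousOn.intervalIntegrable
      apply ContinuousOn.mul continuousOn_const
      apply ContinuousOn.div continuousOn_const continuousOn_id
      intro x hx
      rw [Set.uIcc_of_le (by linarith)] at hx
      exact ne_of_gt (lt_of_lt_of_le ha0 hx.1)
    rw [show g = fun x => (1 / (2 * (n:ℝ))) * (1 / x) - 1 / (8 * n ^ 2 * a ^ 3) from rfl]
    rw [intervalIntegral.integral_sub hint1 intervalIntegrable_const,
      intervalIntegral.integral_const_mul, integral_one_div h0,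
      intervalIntegral.integral_const]
    have : (2 * a) / a = 2 := by field_simp
    rw [this, smul_eq_mul]
    ring
  have hfinal : Real.log 2 / (n * (2 * a)) - (1 / 8) / (n ^ 2 * a ^ 3)
      ≤ a⁻¹ * ∫ x in Icc a (2 * a), f x := by
    have h1 : a⁻¹ * ∫ x in Icc a (2 * a), g x ≤ a⁻¹ * ∫ x in Icc a (2 * a), f x := by
      apply mul_le_mul_of_nonneg_left hmono (by positivity)
    refine le_trans (le_of_eq ?_) h1
    rw [hcalc]
    field_simp
  exact hfinal
end

section
/- (Deterministic bound on the time to reach minimal length.) There exists n₀ (an absolute constant) such that for all integers n ≥ n₀, in the constrained HL(0) interval process almost surely T_1 ≤ (log n)⁷, where T_1 = inf{i ≥ 1 : λ_i ≥ (log n)³/√n}. -/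
open MeasureTheory ProbabilityTheory Filter Set

/-- The constrained HL(0) interval process on the upper half-plane:
`L k`/`R k` are the left/right endpoints of the interval after `k` arrivals,
`x (k+1)` is the attachment location of the `(k+1)`-th particle, uniformly
distributed on `[-L k, R k]` conditionally on `F k`. -/
structure ConstrainedHL {Ω : Type*} {mΩ : MeasurableSpace Ω} (P : Measure Ω) (n : ℕ)
    (F : Filtration ℕ mΩ) (L R x : ℕ → Ω → ℝ) : Prop where
  isProb : IsProbabilityMeasure P
  init_L : ∀ ω, L 1 ω = 1 / Real.sqrt n
  init_R : ∀ ω, R 1 ω = 1 / Real.sqrt n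
  meas_L : ∀ k, Measurable[F k] (L k)
  meas_R : ∀ k, Measurable[F k] (R k)
  meas_x : ∀ k, Measurable[F (k + 1)] (x (k + 1))
  mem_interval : ∀ k, 1 ≤ k → ∀ ω, x (k + 1) ω ∈ Set.Icc (-(L k ω)) (R k ω)
  recur_R : ∀ k, 1 ≤ k → ∀ ω,
      R (k + 1) ω = x (k + 1) ω + Real.sqrt ((R k ω - x (k + 1) ω) ^ 2 + 1 / n)
  recur_L : ∀ k, 1 ≤ k → ∀ ω,
      L (k + 1) ω = -x (k + 1) ω + Real.sqrt ((L k ω + x (k + 1) ω) ^ 2 + 1 / n)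
  uniform : ∀ k, 1 ≤ k → ∀ g : ℝ → ℝ, Measurable g → (∃ M, ∀ u, |g u| ≤ M) →
      P[(fun ω => g (x (k + 1) ω))|F k]
        =ᵐ[P] fun ω => (∫ u in (-(L k ω))..(R k ω), g u) / (L k ω + R k ω)

lemma sqrt_add_sqrt_sq (a b c : ℝ) (ha : 0 ≤ a) (hb : 0 ≤ b) (hc : 0 ≤ c) :
    (a+b)^2 + 4*c ≤ (Real.sqrt (b^2+c) + Real.sqrt (a^2+c))^2 := by
  have hs2 : (Real.sqrt (a^2+c))^2 = a^2 + c := Real.sq_sqrt (by positivity)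
  have ht2 : (Real.sqrt (b^2+c))^2 = b^2 + c := Real.sq_sqrt (by positivity)
  have hst : a*b + c ≤ Real.sqrt (a^2+c) * Real.sqrt (b^2+c) := by
    rw [← Real.sqrt_mul (by positivity)]
    have h1 : (a*b+c)^2 ≤ (a^2+c)*(b^2+c) := by nlinarith [mul_nonneg hc (sq_nonneg (a-b))]
    calc a*b+c = Real.sqrt ((a*b+c)^2) := (Real.sqrt_sq (by positivity)).symm
      _ ≤ _ := Real.sqrt_le_sqrt h1
  nlinarith [hst, hs2, ht2]

/-- Deterministic bound on the time to reach minimal length.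
There is an absolute `n₀` such that for all `n ≥ n₀`, almost surely
`T₁ ≤ (log n)⁷`, where `T₁ = inf{i ≥ 1 : λ_i ≥ (log n)³/√n}`; i.e. almost surely
there is some `i` with `1 ≤ i ≤ (log n)⁷` and `λ_i ≥ (log n)³/√n`. -/
theorem statement13 :
    ∃ n₀ : ℕ, ∀ n : ℕ, n₀ ≤ n →
    ∀ (Ω : Type) (mΩ : MeasurableSpace Ω) (P : Measure Ω)
      (F : Filtration ℕ mΩ) (L R x : ℕ → Ω → ℝ),
      ConstrainedHL P n F L R x →
      ∀ᵐ ω ∂P, ∃ i : ℕ, 1 ≤ i ∧ (i : ℝ) ≤ (Real.log n) ^ 7 ∧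
        (Real.log n) ^ 3 / Real.sqrt n ≤ L i ω + R i ω := by
  refine ⟨9, ?_⟩
  intro n hn Ω mΩ P F L R x hC
  have hn0 : (0:ℝ) < n := by
    have : (9:ℝ) ≤ n := by exact_mod_cast hn
    linarith
  have hsq : (0:ℝ) < Real.sqrt n := Real.sqrt_pos.mpr hn0
  have hexp : Real.exp 2 ≤ 9 := by
    have h := Real.exp_one_lt_d9
    have h2 : Real.exp 2 = Real.exp 1 * Real.exp 1 := by
      rw [← Real.exp_add]; norm_num
    nlinarith [Real.exp_pos 1]
  have hℓ : (2:ℝ) ≤ Real.log n := by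
    rw [Real.le_log_iff_exp_le hn0]
    exact hexp.trans (by exact_mod_cast hn)
  have hℓ0 : (0:ℝ) < Real.log n := lt_of_lt_of_le two_pos hℓ
  have key : ∀ k, 1 ≤ k → ∀ ω, 0 ≤ L k ω + R k ω ∧ 4*(k:ℝ)/n ≤ (L k ω + R k ω)^2 := by
    intro k hk
    induction k, hk using Nat.le_induction with
    | base =>
      intro ω
      rw [hC.init_L, hC.init_R]
      constructor
      · positivity
      · have h4 : (1/Real.sqrt n + 1/Real.sqrt n)^2 = 4/n := by
          rw [← add_div, div_pow, Real.sq_sqrt hn0.le]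
          norm_num
        rw [h4]; norm_num
    | succ k hk ih =>
      intro ω
      obtain ⟨h0, h1⟩ := ih ω
      obtain ⟨hxl, hxr⟩ := hC.mem_interval k hk ω
      have ha : 0 ≤ R k ω - x (k+1) ω := by linarith
      have hb : 0 ≤ L k ω + x (k+1) ω := by linarith
      have hc : (0:ℝ) ≤ 1/(n:ℝ) := by positivity
      have hsum : L (k+1) ω + R (k+1) ω
          = Real.sqrt ((L k ω + x (k+1) ω)^2 + 1/n)
            + Real.sqrt ((R k ω - x (k+1) ω)^2 + 1/n) := by
        rw [hC.recur_L k hk ω, hC.recur_R k hk ω]; ring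
      have hmain := sqrt_add_sqrt_sq (R k ω - x (k+1) ω) (L k ω + x (k+1) ω) (1/n) ha hb hc
      constructor
      · rw [hsum]
        positivity
      · rw [hsum]
        have hab : (R k ω - x (k+1) ω) + (L k ω + x (k+1) ω) = L k ω + R k ω := by ring
        rw [hab] at hmain
        push_cast
        have he : 4*((k:ℝ)+1)/n = 4*(k:ℝ)/n + 4*(1/n) := by ring
        rw [he]
        linarith
  have hℓpos : (0:ℝ) < (Real.log n)^6/4 := by positivity
  have hi1 : 1 ≤ ⌈(Real.log n)^6/4⌉₊ := Nat.ceil_pos.mpr hℓpos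
  have hile : (⌈(Real.log n)^6/4⌉₊ : ℝ) ≤ (Real.log n)^6/4 + 1 :=
    (Nat.ceil_lt_add_one hℓpos.le).le
  have hℓ64 : (64:ℝ) ≤ (Real.log n)^6 := by
    calc (64:ℝ) = 2^6 := by norm_num
      _ ≤ _ := pow_le_pow_left₀ (by norm_num) hℓ 6
  have h2l : 2*(Real.log n)^6 ≤ (Real.log n)^7 := by
    nlinarith [mul_le_mul_of_nonneg_right hℓ (pow_nonneg hℓ0.le 6)]
  have hℓ7 : (⌈(Real.log n)^6/4⌉₊ : ℝ) ≤ (Real.log n)^7 := by linarith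
  have h4i : (Real.log n)^6 ≤ 4*(⌈(Real.log n)^6/4⌉₊:ℝ) := by
    have := Nat.le_ceil ((Real.log n)^6/4)
    linarith
  refine Filter.Eventually.of_forall (fun ω => ⟨⌈(Real.log n)^6/4⌉₊, hi1, hℓ7, ?_⟩)
  obtain ⟨h0, h1⟩ := key ⌈(Real.log n)^6/4⌉₊ hi1 ω
  have hsq1 : ((Real.log n)^3/Real.sqrt n)^2 = (Real.log n)^6/n := by
    rw [div_pow, ← pow_mul, Real.sq_sqrt hn0.le]
  have hsq2 : ((Real.log n)^3/Real.sqrt n)^2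
      ≤ (L ⌈(Real.log n)^6/4⌉₊ ω + R ⌈(Real.log n)^6/4⌉₊ ω)^2 := by
    rw [hsq1]
    calc (Real.log n)^6/n ≤ 4*(⌈(Real.log n)^6/4⌉₊:ℝ)/n := by gcongr
      _ ≤ _ := h1
  calc (Real.log n)^3/Real.sqrt n
      = Real.sqrt (((Real.log n)^3/Real.sqrt n)^2) := (Real.sqrt_sq (by positivity)).symm
    _ ≤ Real.sqrt ((L ⌈(Real.log n)^6/4⌉₊ ω + R ⌈(Real.log n)^6/4⌉₊ ω)^2) :=
        Real.sqrt_le_sqrt hsq2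
    _ = _ := Real.sqrt_sq h0
end
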